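/- For natural numbers n and k with 2k \le n, \(\sum_{i=k}^{n} \binom{i}{k} \binom{n}{2i} = 2^{n-2k-1}\frac{n}{n-k}\binom{n-k}{k}\) when n > 2k, i.e., applying the f-from-h transformation to the h-vector \(h_i = \binom{n}{2i}\) yields the claimed upper bound formula for f-vectors of tight spans. -/

import Mathlib

open Finset

def Sf (n k : ℕ) : ℕ := ∑ i ∈ range (n+1), i.choose k * n.choose (2*i)
def Uf (n k : ℕ) : ℕ := ∑ i ∈ range (n+1), i.choose k * n.choose (2*i+1)

lemma Sf_lt {n k : ℕ} (h : n < 2*k) : Sf n k = 0 := by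
  apply Finset.sum_eq_zero
  intro i hi
  rcases lt_or_ge i k with hik | hik
  · simp [Nat.choose_eq_zero_of_lt hik]
  · have : n < 2*i := by omega
    simp [Nat.choose_eq_zero_of_lt this]

lemma Uf_le {n k : ℕ} (h : n ≤ 2*k) : Uf n k = 0 := by
  apply Finset.sum_eq_zero
  intro i hi
  rcases lt_or_ge i k with hik | hik
  · simp [Nat.choose_eq_zero_of_lt hik]
  · have : n < 2*i+1 := by omega
    simp [Nat.choose_eq_zero_of_lt this]

lemma Sf_diag (k : ℕ) : Sf (2*k) k = 1 := by
  unfold Sf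
  rw [Finset.sum_eq_single k]
  · simp
  · intro i hi hne
    rcases lt_or_ge i k with hik | hik
    · simp [Nat.choose_eq_zero_of_lt hik]
    · have : 2*k < 2*i := by omega
      simp [Nat.choose_eq_zero_of_lt this]
  · intro hk
    exact absurd (Finset.mem_range.2 (by omega)) hk

lemma rec1 (n k : ℕ) : Uf (n+1) k = Uf n k + Sf n k := by
  unfold Uf Sf
  have h1 : ∀ i, (n+1).choose (2*i+1) = n.choose (2*i) + n.choose (2*i+1) :=
    fun i => Nat.choose_succ_succ n (2*i)
  calc ∑ i ∈ range (n+2), i.choose k * (n+1).choose (2*i+1)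
      = ∑ i ∈ range (n+2), (i.choose k * n.choose (2*i+1) + i.choose k * n.choose (2*i)) := by
        refine Finset.sum_congr rfl fun i _ => ?_
        rw [h1, Nat.mul_add]; ring
    _ = (∑ i ∈ range (n+2), i.choose k * n.choose (2*i+1))
        + ∑ i ∈ range (n+2), i.choose k * n.choose (2*i) := Finset.sum_add_distrib
    _ = (∑ i ∈ range (n+1), i.choose k * n.choose (2*i+1))
        + ∑ i ∈ range (n+1), i.choose k * n.choose (2*i) := by
        rw [Finset.sum_range_succ (fun i => i.choose k * n.choose (2*i+1)) (n+1),
            Finset.sum_range_succ (fun i => i.choose k * n.choose (2*i)) (n+1)]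
        have h2 : n.choose (2*(n+1)+1) = 0 := Nat.choose_eq_zero_of_lt (by omega)
        have h3 : n.choose (2*(n+1)) = 0 := Nat.choose_eq_zero_of_lt (by omega)
        rw [h2, h3]; ring

-- shift lemma: ∑_{i<n+1} C(i+1,k+1) C(n,2i+2) = Sf n (k+1)
lemma shift_lemma (n k : ℕ) :
    ∑ i ∈ range (n+1), (i+1).choose (k+1) * n.choose (2*i+2) = Sf n (k+1) := by
  unfold Sf
  have h := Finset.sum_range_succ' (fun i => i.choose (k+1) * n.choose (2*i)) (n+1)
  -- h : ∑ i ∈ range (n+2), C(i,k+1) C(n,2i) = ∑ i ∈ range (n+1), C(i+1,k+1) C(n,2(i+1)) + C(0,k+1)*C(n,0)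
  have h2 := Finset.sum_range_succ (fun i => i.choose (k+1) * n.choose (2*i)) (n+1)
  have htop : n.choose (2*(n+1)) = 0 := Nat.choose_eq_zero_of_lt (by omega)
  have hzero : Nat.choose 0 (k+1) = 0 := Nat.choose_eq_zero_of_lt (by omega)
  simp only [htop, hzero, Nat.mul_zero, Nat.zero_mul, Nat.add_zero] at h h2
  have : ∀ i, 2*(i+1) = 2*i+2 := fun i => by ring
  simp only [this] at h
  omega

lemma rec2zero (n : ℕ) : Sf (n+1) 0 = Sf n 0 + Uf n 0 := by
  unfold Sf Uf
  simp only [Nat.choose_zero_right, Nat.one_mul]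
  rw [Finset.sum_range_succ' (fun i => (n+1).choose (2*i)) (n+1)]
  have h1 : ∀ i, (n+1).choose (2*(i+1)) = n.choose (2*i+1) + n.choose (2*i+2) := by
    intro i
    have : 2*(i+1) = (2*i+1)+1 := by ring
    rw [this]
    exact Nat.choose_succ_succ n (2*i+1)
  simp only [h1]
  norm_num
  rw [Finset.sum_add_distrib]
  -- now need: ∑ C(n,2i+1) + ∑ C(n,2i+2) + 1 = ∑ C(n,2i) + ∑ C(n,2i+1)
  have h2 := Finset.sum_range_succ' (fun i => n.choose (2*i)) (n+1)
  have h3 := Finset.sum_range_succ (fun i => n.choose (2*i)) (n+1)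
  have htop : n.choose (2*(n+1)) = 0 := Nat.choose_eq_zero_of_lt (by omega)
  simp only [htop, Nat.add_zero, Nat.mul_zero, Nat.choose_zero_right] at h2 h3
  have h4 : ∀ i, 2*(i+1) = 2*i+2 := fun i => by ring
  simp only [h4] at h2
  omega

lemma rec2 (n k : ℕ) : Sf (n+1) (k+1) = Sf n (k+1) + Uf n (k+1) + Uf n k := by
  unfold Sf
  rw [Finset.sum_range_succ' (fun i => i.choose (k+1) * (n+1).choose (2*i)) (n+1)]
  have hzero : Nat.choose 0 (k+1) = 0 := Nat.choose_eq_zero_of_lt (by omega)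
  simp only [hzero, Nat.zero_mul, Nat.add_zero]
  have h1 : ∀ i, (n+1).choose (2*(i+1)) = n.choose (2*i+1) + n.choose (2*i+2) := by
    intro i
    have : 2*(i+1) = (2*i+1)+1 := by ring
    rw [this]; exact Nat.choose_succ_succ n (2*i+1)
  have h2 : ∀ i, (i+1).choose (k+1) = i.choose k + i.choose (k+1) :=
    fun i => Nat.choose_succ_succ i k
  calc ∑ i ∈ range (n+1), (i+1).choose (k+1) * (n+1).choose (2*(i+1))
      = ∑ i ∈ range (n+1), ((i.choose k * n.choose (2*i+1)
          + i.choose (k+1) * n.choose (2*i+1))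
          + (i+1).choose (k+1) * n.choose (2*i+2)) := by
        refine Finset.sum_congr rfl fun i _ => ?_
        rw [h1 i, h2 i]
        ring
    _ = Sf n (k+1) + Uf n (k+1) + Uf n k := by
        rw [Finset.sum_add_distrib, Finset.sum_add_distrib, shift_lemma]
        unfold Uf
        ring

lemma key : ∀ n k m, n = 2*k + m + 1 →
    (Sf n k + 2^m * (k+m).choose k = 2^(m+1) * (k+m+1).choose k)
    ∧ Uf n k = 2^m * (k+m).choose k := by
  intro n
  induction n with
  | zero => intro k m h; omega
  | succ n ih =>
    intro k m hn
    constructor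
    · -- A part
      rcases k with _ | k'
      · rw [rec2zero]
        rcases m with _ | m'
        · have h0 : n = 0 := by omega
          subst h0
          norm_num [Sf, Uf]
        · obtain ⟨hA1, hB1⟩ := ih 0 m' (by omega)
          simp only [Nat.zero_add, Nat.choose_zero_right, Nat.mul_one] at hA1 hB1 ⊢
          rw [pow_succ, pow_succ] at *
          omega
      · rw [rec2]
        rcases m with _ | m'
        · have h0 : n = 2*(k'+1) := by omega
          obtain ⟨_, hB2⟩ := ih k' 1 (by omega)
          have hs : Sf n (k'+1) = 1 := by rw [h0]; exact Sf_diag (k'+1)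
          have hu : Uf n (k'+1) = 0 := Uf_le (by omega)
          rw [hs, hu, hB2]
          simp only [Nat.add_zero, Nat.choose_self, Nat.choose_succ_self_right,
            pow_zero, pow_one]
          omega
        · obtain ⟨hA1, hB1⟩ := ih (k'+1) m' (by omega)
          obtain ⟨_, hB2⟩ := ih k' (m'+2) (by omega)
          have hp : (k'+m'+3).choose (k'+1)
              = (k'+m'+2).choose k' + (k'+m'+2).choose (k'+1) :=
            Nat.choose_succ_succ _ _
          rw [show k'+1+m'+1 = k'+m'+2 from by omega,
              show k'+1+m' = k'+m'+1 from by omega] at hA1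
          rw [show k'+1+m' = k'+m'+1 from by omega] at hB1
          rw [show k'+(m'+2) = k'+m'+2 from by omega] at hB2
          rw [show k'+1+(m'+1)+1 = k'+m'+3 from by omega,
              show k'+1+(m'+1) = k'+m'+2 from by omega]
          zify at hA1 hB1 hB2 hp ⊢
          linear_combination hA1 + hB1 + hB2 - 4*(2:ℤ)^m' * hp
    · -- B part
      rw [rec1]
      rcases m with _ | m'
      · have h0 : n = 2*k := by omega
        subst h0
        rw [Uf_le (le_refl _), Sf_diag]
        simp
      · obtain ⟨hA1, hB1⟩ := ih k m' (by omega)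
        rw [show k+(m'+1) = k+m'+1 from by omega]
        zify at hA1 hB1 ⊢
        linear_combination hA1 + hB1

/-- Applying the f-from-h transformation to the h-vector `h_i = C(n, 2i)` yields
`∑_{i=k}^n C(i,k) C(n,2i) = 2^{n-2k-1} (n/(n-k)) C(n-k,k)`, for `n > 2k`. -/
theorem stmt4 (n k : ℕ) (h : 2 * k < n) :
    ∑ i ∈ Finset.Icc k n, ((i.choose k : ℚ) * (n.choose (2 * i) : ℚ))
      = 2 ^ (n - 2 * k - 1) * ((n : ℚ) / ((n : ℚ) - (k : ℚ))) * ((n - k).choose k : ℚ) := by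
  set m := n - 2*k - 1 with hm
  have hn : n = 2*k + m + 1 := by omega
  obtain ⟨hA, -⟩ := key n k m hn
  -- LHS equals Sf n k
  have hIcc : ∑ i ∈ Finset.Icc k n, i.choose k * n.choose (2*i) = Sf n k := by
    unfold Sf
    apply Finset.sum_subset
    · intro i hi
      simp only [Finset.mem_Icc] at hi
      exact Finset.mem_range.2 (by omega)
    · intro i hi hni
      simp only [Finset.mem_Icc] at hni
      have : i < k := by
        have := Finset.mem_range.1 hi; omega
      simp [Nat.choose_eq_zero_of_lt this]
  have hL : ∑ i ∈ Finset.Icc k n, ((i.choose k : ℚ) * (n.choose (2 * i) : ℚ))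
      = (Sf n k : ℚ) := by
    rw [← hIcc]; push_cast; rfl
  rw [hL]
  have e2 : n - k = k + m + 1 := by omega
  rw [e2]
  have h2 : (k+m).choose m = (k+m).choose k := by
    have := (Nat.choose_symm (show m ≤ k+m by omega)).symm
    rwa [show k+m-m = k from by omega] at this
  have h3 : (k+m+1).choose (m+1) = (k+m+1).choose k := by
    have := (Nat.choose_symm (show m+1 ≤ k+m+1 by omega)).symm
    rwa [show k+m+1-(m+1) = k from by omega] at this
  have h1 : (k+m+1) * (k+m).choose m = (k+m+1).choose (m+1) * (m+1) :=
    Nat.add_one_mul_choose_eq (k+m) m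
  rw [h2, h3] at h1
  set A := ((k+m+1).choose k : ℚ) with hA'
  set B := ((k+m).choose k : ℚ) with hB'
  set S := (Sf n k : ℚ) with hS'
  have hnq : (n:ℚ) = 2*k + m + 1 := by exact_mod_cast congrArg (Nat.cast : ℕ → ℚ) hn
  have hAq : S + 2^m * B = 2^(m+1) * A := by rw [hA', hB', hS']; exact_mod_cast hA
  have h1q : ((k:ℚ)+m+1) * B = A * ((m:ℚ)+1) := by rw [hA', hB']; exact_mod_cast h1
  rw [hnq]
  have hden : (2*(k:ℚ)+m+1) - k ≠ 0 := by
    have h0 : (0:ℚ) ≤ (k:ℚ) := by positivity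
    have h0' : (0:ℚ) ≤ (m:ℚ) := by positivity
    intro hc; nlinarith
  field_simp
  linear_combination ((k:ℚ)+m+1) * hAq - 2^m * h1q
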